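/- Let α ≥ 0, let w(x) = x^α on [0,1], and let dμ = w dx. Then for every interval (a,b) ⊂ [0,1], every μ-integrable function u on (a,b) and every upper gradient g of u on (a,b), ⨍_{(a,b)} |u − u_{(a,b)}| dμ ≤ (b − a) ⨍_{(a,b)} g dμ, where u_{(a,b)} = ⨍_{(a,b)} u dμ denotes the μ-average; that is, μ supports a 1-Poincaré inequality on every subinterval of [0,1] with dilation constant 1 and constant 2. -/

import Mathlib

open MeasureTheory Set Filter
open scoped ENNReal NNReal Topology

noncomputable section

/-- A "measure on ℝ" in the sense of the paper: positive and finite on all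
nonempty bounded open intervals (balls). -/
def IsMeasureOnR (μ : Measure ℝ) : Prop :=
  ∀ a b : ℝ, a < b → 0 < μ (Ioo a b) ∧ μ (Ioo a b) < ⊤

/-- `g` is an upper gradient of `u` on the interval `J ⊆ ℝ`. -/
def IsUpperGradientOn (g u : ℝ → ℝ) (J : Set ℝ) : Prop :=
  (∀ x, 0 ≤ g x) ∧ Measurable g ∧
    ∀ a b : ℝ, a ≤ b → Icc a b ⊆ J →
      ENNReal.ofReal |u b - u a| ≤ ∫⁻ t in Icc a b, ENNReal.ofReal (g t)

/-- `μ` is doubling within the set `B₀` with constant `Cd`. -/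
def DoublingWithinC (μ : Measure ℝ) (Cd : ℝ≥0∞) (B₀ : Set ℝ) : Prop :=
  ∀ x r : ℝ, 0 < r → Ioo (x - r) (x + r) ⊆ B₀ →
    μ (Ioo (x - 2*r) (x + 2*r)) ≤ Cd * μ (Ioo (x - r) (x + r))

/-- `μ` is doubling within the set `B₀`. -/
def DoublingWithin (μ : Measure ℝ) (B₀ : Set ℝ) : Prop :=
  ∃ Cd : ℝ≥0∞, 0 < Cd ∧ Cd < ⊤ ∧ DoublingWithinC μ Cd B₀

/-- The left-hand side `⨍_B |u - u_B| dμ` of the Poincaré inequality,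
computed in `ℝ≥0∞`. -/
def PoinLHS (μ : Measure ℝ) (u : ℝ → ℝ) (B : Set ℝ) : ℝ≥0∞ :=
  (∫⁻ t in B, ENNReal.ofReal |u t - ⨍ s in B, u s ∂μ| ∂μ) / μ B

/-- The quantity `(⨍_B g^p dμ)^(1/p)` computed in `ℝ≥0∞`. -/
def PoinRHS (μ : Measure ℝ) (g : ℝ → ℝ≥0∞) (p : ℝ) (B : Set ℝ) : ℝ≥0∞ :=
  ((∫⁻ t in B, g t ^ p ∂μ) / μ B) ^ (1/p)

/-- `μ` supports the `p`-Poincaré inequality within `B₀` with constant `C`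
and dilation constant `lam`. -/
def PoincareWithinC (μ : Measure ℝ) (p C lam : ℝ) (B₀ : Set ℝ) : Prop :=
  ∀ x r : ℝ, 0 < r → Ioo (x - r) (x + r) ⊆ B₀ →
    ∀ u g : ℝ → ℝ,
      IntegrableOn u (Ioo (x - lam*r) (x + lam*r)) μ →
      IsUpperGradientOn g u (Ioo (x - lam*r) (x + lam*r)) →
      PoinLHS μ u (Ioo (x - r) (x + r)) ≤
        ENNReal.ofReal (C * r) *
          PoinRHS μ (fun t => ENNReal.ofReal (g t)) p (Ioo (x - lam*r) (x + lam*r))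

/-- `μ` supports the `p`-Poincaré inequality within `B₀`. -/
def PoincareWithin (μ : Measure ℝ) (p : ℝ) (B₀ : Set ℝ) : Prop :=
  ∃ C > (0:ℝ), ∃ lam ≥ (1:ℝ), PoincareWithinC μ p C lam B₀

/-- `μ` is `p`-admissible within `B₀`. -/
def AdmissibleWithin (μ : Measure ℝ) (p : ℝ) (B₀ : Set ℝ) : Prop :=
  DoublingWithin μ B₀ ∧ PoincareWithin μ p B₀

/-- `μ` is locally `p`-admissible. -/
def LocallyAdmissible (μ : Measure ℝ) (p : ℝ) : Prop :=
  ∀ x : ℝ, ∃ R > (0:ℝ), AdmissibleWithin μ p (Ioo (x - R) (x + R))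

/-- The pointwise upper Lipschitz constant
`Lip u(x) = limsup_{y→x, y ∈ s} |u(y)-u(x)|/|y-x|`, computed in `ℝ≥0∞`. -/
def eLipWithin (u : ℝ → ℝ) (s : Set ℝ) (x : ℝ) : ℝ≥0∞ :=
  Filter.limsup (fun y => ENNReal.ofReal (|u y - u x| / |y - x|)) (𝓝[s \ {x}] x)

/-- `μ` supports the Lipschitz `p`-Poincaré inequality within `B₀` with
constant `C` and dilation constant `lam`. -/
def LipPoincareWithinC (μ : Measure ℝ) (p C lam : ℝ) (B₀ : Set ℝ) : Prop :=
  ∀ x r : ℝ, 0 < r → Ioo (x - r) (x + r) ⊆ B₀ →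
    ∀ (u : ℝ → ℝ) (K : ℝ≥0), LipschitzOnWith K u (Ioo (x - lam*r) (x + lam*r)) →
      PoinLHS μ u (Ioo (x - r) (x + r)) ≤
        ENNReal.ofReal (C * r) *
          PoinRHS μ (eLipWithin u (Ioo (x - lam*r) (x + lam*r))) p
            (Ioo (x - lam*r) (x + lam*r))

/-- `μ` supports the Lipschitz `p`-Poincaré inequality within `B₀`. -/
def LipPoincareWithin (μ : Measure ℝ) (p : ℝ) (B₀ : Set ℝ) : Prop :=
  ∃ C > (0:ℝ), ∃ lam ≥ (1:ℝ), LipPoincareWithinC μ p C lam B₀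

/-- `μ` is Lipschitz `p`-admissible within `B₀`. -/
def LipAdmissibleWithin (μ : Measure ℝ) (p : ℝ) (B₀ : Set ℝ) : Prop :=
  DoublingWithin μ B₀ ∧ LipPoincareWithin μ p B₀

/-- `μ` is locally Lipschitz `p`-admissible. -/
def LocallyLipAdmissible (μ : Measure ℝ) (p : ℝ) : Prop :=
  ∀ x : ℝ, ∃ R > (0:ℝ), LipAdmissibleWithin μ p (Ioo (x - R) (x + R))

/-- The Muckenhoupt `A_p` condition for `w` on the set `B` with constant `C`
(for `p = 1` and `p ≠ 1` respectively). -/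
def ApOn (p : ℝ) (w : ℝ → ℝ) (B : Set ℝ) (C : ℝ) : Prop :=
  (p = 1 →
    (∫⁻ x in B, ENNReal.ofReal (w x)) / volume B ≤
      ENNReal.ofReal C * essInf (fun x => ENNReal.ofReal (w x)) (volume.restrict B)) ∧
  (p ≠ 1 →
    (∫⁻ x in B, ENNReal.ofReal (w x)) / volume B ≤
      ENNReal.ofReal C *
        ((∫⁻ x in B, ENNReal.ofReal (w x) ^ (1/(1-p))) / volume B) ^ (1-p))

/-- `w` is an `A_p` weight within `B₀`. -/
def ApWithin (p : ℝ) (w : ℝ → ℝ) (B₀ : Set ℝ) : Prop :=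
  ∃ C > (0:ℝ), ∀ x r : ℝ, 0 < r → Ioo (x - r) (x + r) ⊆ B₀ →
    ApOn p w (Ioo (x - r) (x + r)) C

/-- `w` is a local `A_p` weight. -/
def LocalAp (p : ℝ) (w : ℝ → ℝ) : Prop :=
  ∀ x : ℝ, ∃ R > (0:ℝ), ApWithin p w (Ioo (x - R) (x + R))

/-- `w` is a global `A_p` weight. -/
def GlobalAp (p : ℝ) (w : ℝ → ℝ) : Prop :=
  ∃ C > (0:ℝ), ∀ x r : ℝ, 0 < r → ApOn p w (Ioo (x - r) (x + r)) C

end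

section PwpAux

/-- Bernoulli-type bound: `q^β - p^β ≤ β (q-p) q^(β-1)` for `0 ≤ p ≤ q`, `1 ≤ β`. -/
private lemma pwp_rpow_sub_rpow_le (p q β : ℝ) (hp : 0 ≤ p) (hpq : p ≤ q) (hβ : 1 ≤ β) :
    q ^ β - p ^ β ≤ β * (q - p) * q ^ (β - 1) := by
  rcases eq_or_lt_of_le (hp.trans hpq) with hq | hq
  · rw [← hq]
    have hp0 : p = 0 := le_antisymm (hq ▸ hpq) hp
    have hβ0 : β ≠ 0 := by linarith
    simp [hp0, Real.zero_rpow hβ0]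
  · have hs : -1 ≤ p / q - 1 := by
      have : 0 ≤ p / q := div_nonneg hp hq.le
      linarith
    have hber := one_add_mul_self_le_rpow_one_add hs hβ
    have h1 : (1 : ℝ) + (p / q - 1) = p / q := by ring
    rw [h1] at hber
    have hdr : (p / q) ^ β = p ^ β / q ^ β := Real.div_rpow hp hq.le β
    rw [hdr] at hber
    have hqβ : 0 < q ^ β := Real.rpow_pos_of_pos hq β
    have hmul := mul_le_mul_of_nonneg_right hber hqβ.le
    rw [div_mul_cancel₀ _ hqβ.ne'] at hmul
    have hq1 : q ^ β / q = q ^ (β - 1) := by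
      rw [← Real.rpow_sub_one hq.ne']
    have hpq' : β * (p / q - 1) * q ^ β = β * (p - q) * q ^ (β - 1) := by
      rw [← hq1]
      field_simp
    nlinarith [hmul, hpq']

/-- Key kernel inequality. -/
private lemma pwp_keyPoly (a x b β : ℝ) (ha : 0 ≤ a) (hax : a < x) (hxb : x < b)
    (hb : b ≤ 1) (hβ : 1 ≤ β) :
    2 * ((x ^ β - a ^ β) * (b ^ β - x ^ β)) ≤
      β * (b - a) * x ^ (β - 1) * (b ^ β - a ^ β) := by
  have hx0 : 0 < x := lt_of_le_of_lt ha hax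
  have hb0 : 0 < b := hx0.trans hxb
  have hβ0 : 0 < β := lt_of_lt_of_le one_pos hβ
  have hab : a ^ β ≤ x ^ β := Real.rpow_le_rpow ha hax.le hβ0.le
  have hxB : x ^ β ≤ b ^ β := Real.rpow_le_rpow hx0.le hxb.le hβ0.le
  have hP : 0 ≤ x ^ β - a ^ β := by linarith
  have hQ : 0 ≤ b ^ β - x ^ β := by linarith
  have hM : 0 ≤ b ^ β - a ^ β := by linarith
  have hxp : 0 < x ^ (β - 1) := Real.rpow_pos_of_pos hx0 _
  have hbp : 0 < b ^ (β - 1) := Real.rpow_pos_of_pos hb0 _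
  rcases le_or_gt (2 * (x - a)) (b - a) with hcase | hcase
  · have h1 : x ^ β - a ^ β ≤ β * (x - a) * x ^ (β - 1) :=
      pwp_rpow_sub_rpow_le a x β ha hax.le hβ
    have h2 : b ^ β - x ^ β ≤ b ^ β - a ^ β := by linarith
    nlinarith [mul_le_mul h1 h2 hQ (mul_nonneg (mul_nonneg hβ0.le (by linarith)) hxp.le),
      mul_le_mul_of_nonneg_right hcase (mul_nonneg hxp.le hM)]
  · have hbx : 2 * (b - x) ≤ b - a := by linarith
    have h1 : b ^ β - x ^ β ≤ β * (b - x) * b ^ (β - 1) :=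
      pwp_rpow_sub_rpow_le x b β hx0.le hxb.le hβ
    have hPb : (x ^ β - a ^ β) * b ^ β ≤ x ^ β * (b ^ β - a ^ β) := by
      have : a ^ β * x ^ β ≤ a ^ β * b ^ β :=
        mul_le_mul_of_nonneg_left hxB (Real.rpow_nonneg ha β)
      nlinarith
    have hxx : x ^ β = x ^ (β - 1) * x := by
      rw [← Real.rpow_add_one hx0.ne' (β - 1)]; ring_nf
    have hbb : b ^ β = b ^ (β - 1) * b := by
      rw [← Real.rpow_add_one hb0.ne' (β - 1)]; ring_nf
    have hxbb : x * b ^ (β - 1) ≤ b ^ β := by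
      rw [hbb]; nlinarith
    have hbB : 0 < b ^ β := Real.rpow_pos_of_pos hb0 β
    rw [← mul_le_mul_iff_of_pos_right hbB]
    calc 2 * ((x ^ β - a ^ β) * (b ^ β - x ^ β)) * b ^ β
        = 2 * (b ^ β - x ^ β) * ((x ^ β - a ^ β) * b ^ β) := by ring
      _ ≤ 2 * (b ^ β - x ^ β) * (x ^ β * (b ^ β - a ^ β)) := by
          apply mul_le_mul_of_nonneg_left hPb; linarith
      _ ≤ 2 * (β * (b - x) * b ^ (β - 1)) * (x ^ β * (b ^ β - a ^ β)) := by
          apply mul_le_mul_of_nonneg_right _ (mul_nonneg (Real.rpow_nonneg hx0.le β) hM)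
          linarith
      _ = (β * (b ^ β - a ^ β) * x ^ (β - 1)) * ((2 * (b - x)) * (x * b ^ (β - 1))) := by
          rw [hxx]; ring
      _ ≤ (β * (b ^ β - a ^ β) * x ^ (β - 1)) * ((b - a) * b ^ β) := by
          apply mul_le_mul_of_nonneg_left _ (by positivity)
          apply mul_le_mul hbx hxbb (by positivity) (by linarith)
      _ = β * (b - a) * x ^ (β - 1) * (b ^ β - a ^ β) * b ^ β := by ring

/-- The measure of `Ioc p q` under the power weight. -/
private lemma pwp_measIoc {α : ℝ} (hα : 0 ≤ α) (p q : ℝ) (hp : 0 ≤ p) (hpq : p ≤ q) :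
    (volume.withDensity fun x => ENNReal.ofReal (x ^ α)) (Ioc p q) =
      ENNReal.ofReal ((q ^ (α + 1) - p ^ (α + 1)) / (α + 1)) := by
  rw [withDensity_apply _ measurableSet_Ioc]
  have hint : IntegrableOn (fun x : ℝ => x ^ α) (Ioc p q) volume := by
    rw [← intervalIntegrable_iff_integrableOn_Ioc_of_le hpq]
    exact intervalIntegral.intervalIntegrable_rpow (Or.inl hα)
  have hnn : 0 ≤ᵐ[volume.restrict (Ioc p q)] fun x : ℝ => x ^ α := by
    filter_upwards [ae_restrict_mem measurableSet_Ioc] with x hx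
    exact Real.rpow_nonneg (le_of_lt (lt_of_le_of_lt hp hx.1)) α
  rw [← ofReal_integral_eq_lintegral_ofReal hint hnn]
  congr 1
  rw [← intervalIntegral.integral_of_le hpq, integral_rpow (Or.inl (by linarith))]

private lemma pwp_measPoint {α : ℝ} (y : ℝ) :
    (volume.withDensity fun x => ENNReal.ofReal (x ^ α)) {y} = 0 := by
  rw [withDensity_apply _ (measurableSet_singleton y)]
  exact setLIntegral_measure_zero _ _ (measure_singleton y)

end PwpAux

/-- Example 5.1: for `w(x) = x^α`, `α ≥ 0`, and
`dμ = w dx`, the `1`-Poincaré inequality holds on every subinterval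
`(a,b) ⊆ [0,1]` with dilation constant `1` and constant `2`, i.e.
`⨍_{(a,b)} |u - u_{(a,b)}| dμ ≤ (b-a) ⨍_{(a,b)} g dμ`. -/
theorem power_weight_one_poincare (α : ℝ) (hα : 0 ≤ α) :
    ∀ a b : ℝ, 0 ≤ a → a < b → b ≤ 1 →
      ∀ u g : ℝ → ℝ,
        IntegrableOn u (Ioo a b)
          (volume.withDensity fun x => ENNReal.ofReal (x ^ α)) →
        IsUpperGradientOn g u (Ioo a b) →
        PoinLHS (volume.withDensity fun x => ENNReal.ofReal (x ^ α)) u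
            (Ioo a b) ≤
          ENNReal.ofReal (b - a) *
            PoinRHS (volume.withDensity fun x => ENNReal.ofReal (x ^ α))
              (fun t => ENNReal.ofReal (g t)) 1 (Ioo a b) := by
  intro a b ha hab hb1 u g hu hg
  obtain ⟨hg0, hgm, hgug⟩ := hg
  unfold PoinLHS PoinRHS
  set β := α + 1 with hβdef
  have hβ1 : 1 ≤ β := by simp [hβdef]; linarith
  have hβ0 : 0 < β := by linarith
  set w : ℝ → ℝ≥0∞ := fun x => ENNReal.ofReal (x ^ α) with hwdef
  set μ : Measure ℝ := volume.withDensity w with hμdef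
  set B : Set ℝ := Ioo a b with hBdef
  have hBm : MeasurableSet B := measurableSet_Ioo
  have hwm : Measurable w := by
    rw [hwdef]; exact (by fun_prop : Measurable fun x : ℝ => x ^ α).ennreal_ofReal
  have hgE : Measurable fun x => ENNReal.ofReal (g x) := hgm.ennreal_ofReal
  -- measure of intervals
  have hIoc : ∀ p q : ℝ, 0 ≤ p → p ≤ q →
      μ (Ioc p q) = ENNReal.ofReal ((q ^ β - p ^ β) / β) := fun p q hp hpq =>
    pwp_measIoc hα p q hp hpq
  have hpt : ∀ y : ℝ, μ {y} = 0 := fun y => pwp_measPoint y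
  -- measure of B
  have hMB : μ B = ENNReal.ofReal ((b ^ β - a ^ β) / β) := by
    refine le_antisymm ?_ ?_
    · rw [← hIoc a b ha hab.le]
      exact measure_mono Ioo_subset_Ioc_self
    · rw [← hIoc a b ha hab.le]
      have hsub : Ioc a b ⊆ B ∪ {b} := by
        intro y hy
        rcases eq_or_lt_of_le hy.2 with h | h
        · exact Or.inr (by simp [h])
        · exact Or.inl ⟨hy.1, h⟩
      calc μ (Ioc a b) ≤ μ (B ∪ {b}) := measure_mono hsub
        _ ≤ μ B + μ {b} := measure_union_le _ _
        _ = μ B := by rw [hpt b, add_zero]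
  have habβ : a ^ β < b ^ β := Real.rpow_lt_rpow ha hab hβ0
  have hM0 : μ B ≠ 0 := by
    rw [hMB]
    simp only [ne_eq, ENNReal.ofReal_eq_zero, not_le]
    exact div_pos (by linarith) hβ0
  have hMtop : μ B ≠ ⊤ := by rw [hMB]; exact ENNReal.ofReal_ne_top
  haveI hfin : IsFiniteMeasure (μ.restrict B) :=
    ⟨by rw [Measure.restrict_apply_univ]; exact lt_of_le_of_ne le_top hMtop⟩
  -- P and Q
  have hPx : ∀ x ∈ B, μ (Iic x ∩ B) = ENNReal.ofReal ((x ^ β - a ^ β) / β) := by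
    intro x hx
    have : Iic x ∩ B = Ioc a x := by
      ext y
      constructor
      · rintro ⟨h1, h2, h3⟩; exact ⟨h2, h1⟩
      · rintro ⟨h1, h2⟩; exact ⟨h2, h1, lt_of_le_of_lt h2 hx.2⟩
    rw [this, hIoc a x ha hx.1.le]
  have hQx : ∀ x ∈ B, μ (Ici x ∩ B) ≤ ENNReal.ofReal ((b ^ β - x ^ β) / β) := by
    intro x hx
    have hsub : Ici x ∩ B ⊆ {x} ∪ Ioc x b := by
      rintro y ⟨h1, h2, h3⟩
      rcases eq_or_lt_of_le (show x ≤ y from h1) with h | h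
      · exact Or.inl (by simp [← h])
      · exact Or.inr ⟨h, h3.le⟩
    calc μ (Ici x ∩ B) ≤ μ ({x} ∪ Ioc x b) := measure_mono hsub
      _ ≤ μ {x} + μ (Ioc x b) := measure_union_le _ _
      _ = ENNReal.ofReal ((b ^ β - x ^ β) / β) := by
          rw [hpt x, zero_add, hIoc x b (ha.trans hx.1.le) hx.2.le]
  -- kernel bound
  have hker : ∀ x ∈ B, 2 * (μ (Iic x ∩ B) * μ (Ici x ∩ B)) ≤
      ENNReal.ofReal (b - a) * (w x * μ B) := by
    intro x hx
    have hx0 : 0 < x := lt_of_le_of_lt ha hx.1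
    have hPr : 0 ≤ (x ^ β - a ^ β) / β := by
      have : a ^ β ≤ x ^ β := Real.rpow_le_rpow ha hx.1.le hβ0.le
      exact div_nonneg (by linarith) hβ0.le
    have hQr : 0 ≤ (b ^ β - x ^ β) / β := by
      have : x ^ β ≤ b ^ β := Real.rpow_le_rpow hx0.le hx.2.le hβ0.le
      exact div_nonneg (by linarith) hβ0.le
    have hkey := pwp_keyPoly a x b β ha hx.1 hx.2 hb1 hβ1
    have hreal : 2 * ((x ^ β - a ^ β) / β * ((b ^ β - x ^ β) / β)) ≤
        (b - a) * (x ^ (β - 1) * ((b ^ β - a ^ β) / β)) := by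
      have h2 : 2 * ((x ^ β - a ^ β) / β * ((b ^ β - x ^ β) / β)) =
          (2 * ((x ^ β - a ^ β) * (b ^ β - x ^ β))) / (β * β) := by
        field_simp
      have h3 : (b - a) * (x ^ (β - 1) * ((b ^ β - a ^ β) / β)) =
          (β * (b - a) * x ^ (β - 1) * (b ^ β - a ^ β)) / (β * β) := by
        field_simp
      rw [h2, h3]
      gcongr
    calc 2 * (μ (Iic x ∩ B) * μ (Ici x ∩ B))
        ≤ 2 * (ENNReal.ofReal ((x ^ β - a ^ β) / β) *
            ENNReal.ofReal ((b ^ β - x ^ β) / β)) := by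
          rw [hPx x hx]
          exact mul_le_mul_right (mul_le_mul_right (hQx x hx) _) 2
      _ = ENNReal.ofReal (2 * ((x ^ β - a ^ β) / β * ((b ^ β - x ^ β) / β))) := by
          rw [ENNReal.ofReal_mul (by norm_num), ENNReal.ofReal_mul hPr,
            ENNReal.ofReal_ofNat]
      _ ≤ ENNReal.ofReal ((b - a) * (x ^ (β - 1) * ((b ^ β - a ^ β) / β))) :=
          ENNReal.ofReal_le_ofReal hreal
      _ = ENNReal.ofReal (b - a) * (w x * μ B) := by
          rw [ENNReal.ofReal_mul (by linarith), ENNReal.ofReal_mul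
            (Real.rpow_nonneg hx0.le _), hMB, hwdef]
          have : β - 1 = α := by simp [hβdef]
          rw [this]
  -- abbreviations
  set c : ℝ := ⨍ s in B, u s ∂μ with hcdef
  set Y : ℝ≥0∞ := ∫⁻ t in B, ENNReal.ofReal (g t) ∂μ with hYdef
  have hone : (1:ℝ)/(1:ℝ) = 1 := by norm_num
  rw [hone]
  simp only [ENNReal.rpow_one]
  -- basic facts
  have hMrT : 0 < (μ B).toReal := ENNReal.toReal_pos hM0 hMtop
  have hind_le_one : ∀ (S : Set ℝ) (y : ℝ), S.indicator (1 : ℝ → ℝ≥0∞) y ≤ 1 := by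
    intro S y; by_cases h : y ∈ S <;> simp [Set.indicator_apply, h]
  have hPle : ∀ x : ℝ, μ (Iic x ∩ B) ≠ ⊤ := fun x =>
    ne_top_of_le_ne_top hMtop (measure_mono inter_subset_right)
  have hQle : ∀ x : ℝ, μ (Ici x ∩ B) ≠ ⊤ := fun x =>
    ne_top_of_le_ne_top hMtop (measure_mono inter_subset_right)
  have hPmono : Monotone fun x : ℝ => μ (Iic x ∩ B) := fun x y hxy =>
    measure_mono (inter_subset_inter (Iic_subset_Iic.2 hxy) subset_rfl)
  have hQanti : Antitone fun x : ℝ => μ (Ici x ∩ B) := fun x y hxy =>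
    measure_mono (inter_subset_inter (Ici_subset_Ici.2 hxy) subset_rfl)
  have hPmeas : Measurable fun x : ℝ => μ (Iic x ∩ B) := hPmono.measurable
  have hQmeas : Measurable fun x : ℝ => μ (Ici x ∩ B) := hQanti.measurable
  have hflipIci : ∀ x t : ℝ, (Ici x).indicator (1 : ℝ → ℝ≥0∞) t = (Iic t).indicator 1 x := by
    intro x t; by_cases h : x ≤ t <;> simp [Set.indicator_apply, h]
  have hflipIic : ∀ x t : ℝ, (Iic x).indicator (1 : ℝ → ℝ≥0∞) t = (Ici t).indicator 1 x := by
    intro x t; by_cases h : t ≤ x <;> simp [Set.indicator_apply, h]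
  have hindle : Measurable fun p : ℝ × ℝ => (Iic p.2).indicator (1 : ℝ → ℝ≥0∞) p.1 := by
    have he : (fun p : ℝ × ℝ => (Iic p.2).indicator (1 : ℝ → ℝ≥0∞) p.1) =
        {p : ℝ × ℝ | p.1 ≤ p.2}.indicator 1 := by
      funext p; by_cases h : p.1 ≤ p.2 <;> simp [Set.indicator_apply, h]
    rw [he]
    exact measurable_const.indicator (measurableSet_le measurable_fst measurable_snd)
  have hindge : Measurable fun p : ℝ × ℝ => (Ici p.2).indicator (1 : ℝ → ℝ≥0∞) p.1 := by
    have he : (fun p : ℝ × ℝ => (Ici p.2).indicator (1 : ℝ → ℝ≥0∞) p.1) =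
        {p : ℝ × ℝ | p.2 ≤ p.1}.indicator 1 := by
      funext p; by_cases h : p.2 ≤ p.1 <;> simp [Set.indicator_apply, h]
    rw [he]
    exact measurable_const.indicator (measurableSet_le measurable_snd measurable_fst)
  -- the comparison kernel
  set K : ℝ → ℝ → ℝ → ℝ≥0∞ := fun x s t =>
    ENNReal.ofReal (g x) * (Iic x).indicator 1 s * (Ici x).indicator 1 t +
      ENNReal.ofReal (g x) * (Ici x).indicator 1 s * (Iic x).indicator 1 t with hKdef
  set D : ℝ≥0∞ := ∫⁻ t in B, ∫⁻ s in B, ENNReal.ofReal |u t - u s| ∂μ ∂μ with hDdef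
  -- Step A : compare with the double integral
  have hstepA : (∫⁻ t in B, ENNReal.ofReal |u t - c| ∂μ) ≤ D / μ B := by
    have hpoint : ∀ t : ℝ, ENNReal.ofReal |u t - c| ≤
        (∫⁻ s in B, ENNReal.ofReal |u t - u s| ∂μ) / μ B := by
      intro t
      have hint : Integrable (fun s => u t - u s) (μ.restrict B) :=
        (integrable_const _).sub hu
      have h2 : ∫ s in B, (u t - u s) ∂μ = (μ B).toReal * (u t - c) := by
        rw [integral_sub (integrable_const _) hu, setIntegral_const, hcdef, setAverage_eq]
        simp only [smul_eq_mul, measureReal_def]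
        field_simp
      have h3 : |u t - c| ≤ (∫ s in B, |u t - u s| ∂μ) / (μ B).toReal := by
        rw [le_div_iff₀ hMrT]
        calc |u t - c| * (μ B).toReal = |∫ s in B, (u t - u s) ∂μ| := by
              rw [h2, abs_mul, abs_of_nonneg (le_of_lt hMrT)]
              ring
          _ ≤ ∫ s in B, |u t - u s| ∂μ := by
              simpa [Real.norm_eq_abs] using
                norm_integral_le_integral_norm (μ := μ.restrict B) (fun s => u t - u s)
      calc ENNReal.ofReal |u t - c|
          ≤ ENNReal.ofReal ((∫ s in B, |u t - u s| ∂μ) / (μ B).toReal) :=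
            ENNReal.ofReal_le_ofReal h3
        _ = ENNReal.ofReal (∫ s in B, |u t - u s| ∂μ) / ENNReal.ofReal (μ B).toReal :=
            ENNReal.ofReal_div_of_pos hMrT
        _ = (∫⁻ s in B, ENNReal.ofReal |u t - u s| ∂μ) / μ B := by
            rw [ofReal_integral_eq_lintegral_ofReal hint.abs
              (Filter.Eventually.of_forall fun s => abs_nonneg _),
              ENNReal.ofReal_toReal hMtop]
    calc (∫⁻ t in B, ENNReal.ofReal |u t - c| ∂μ)
        ≤ ∫⁻ t in B, (∫⁻ s in B, ENNReal.ofReal |u t - u s| ∂μ) / μ B ∂μ :=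
          lintegral_mono fun t => hpoint t
      _ = D / μ B := by
          simp only [div_eq_mul_inv]
          rw [lintegral_mul_const' _ _ (ENNReal.inv_ne_top.mpr hM0), hDdef]
  -- Step B : upper gradient estimate
  have hstepB : D ≤ ∫⁻ t in B, ∫⁻ s in B, ∫⁻ x in B, K x s t ∂volume ∂μ ∂μ := by
    rw [hDdef]
    refine lintegral_mono_ae ?_
    filter_upwards [ae_restrict_mem hBm] with t ht
    refine lintegral_mono_ae ?_
    filter_upwards [ae_restrict_mem hBm] with s hs
    rcases le_total s t with hst | hst
    · have hsub : Icc s t ⊆ B := fun y hy =>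
        ⟨lt_of_lt_of_le hs.1 hy.1, lt_of_le_of_lt hy.2 ht.2⟩
      calc ENNReal.ofReal |u t - u s|
          ≤ ∫⁻ x in Icc s t, ENNReal.ofReal (g x) := hgug s t hst hsub
        _ ≤ ∫⁻ x in Icc s t, K x s t ∂volume := by
            refine lintegral_mono_ae ?_
            filter_upwards [ae_restrict_mem measurableSet_Icc] with x hx
            have h1 : (Iic x).indicator (1 : ℝ → ℝ≥0∞) s = 1 :=
              Set.indicator_of_mem (show s ∈ Iic x from hx.1) _
            have h2 : (Ici x).indicator (1 : ℝ → ℝ≥0∞) t = 1 :=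
              Set.indicator_of_mem (show t ∈ Ici x from hx.2) _
            simp only [hKdef, h1, h2, mul_one]
            exact self_le_add_right _ _
        _ ≤ ∫⁻ x in B, K x s t ∂volume :=
            lintegral_mono' (Measure.restrict_mono hsub le_rfl) le_rfl
    · have hsub : Icc t s ⊆ B := fun y hy =>
        ⟨lt_of_lt_of_le ht.1 hy.1, lt_of_le_of_lt hy.2 hs.2⟩
      rw [abs_sub_comm]
      calc ENNReal.ofReal |u s - u t|
          ≤ ∫⁻ x in Icc t s, ENNReal.ofReal (g x) := hgug t s hst hsub
        _ ≤ ∫⁻ x in Icc t s, K x s t ∂volume := by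
            refine lintegral_mono_ae ?_
            filter_upwards [ae_restrict_mem measurableSet_Icc] with x hx
            have h1 : (Ici x).indicator (1 : ℝ → ℝ≥0∞) s = 1 :=
              Set.indicator_of_mem (show s ∈ Ici x from hx.2) _
            have h2 : (Iic x).indicator (1 : ℝ → ℝ≥0∞) t = 1 :=
              Set.indicator_of_mem (show t ∈ Iic x from hx.1) _
            simp only [hKdef, h1, h2, mul_one]
            exact le_add_self
        _ ≤ ∫⁻ x in B, K x s t ∂volume :=
            lintegral_mono' (Measure.restrict_mono hsub le_rfl) le_rfl
  -- first swap
  have hswap1 : ∀ t : ℝ, (∫⁻ s in B, ∫⁻ x in B, K x s t ∂volume ∂μ) =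
      ∫⁻ x in B, ∫⁻ s in B, K x s t ∂μ ∂volume := by
    intro t
    apply lintegral_lintegral_swap
    apply Measurable.aemeasurable
    have he : Function.uncurry (fun s x => K x s t) = fun p : ℝ × ℝ => K p.2 p.1 t := rfl
    rw [he]
    simp only [hKdef]
    apply Measurable.add
    · apply Measurable.mul
      · exact (hgE.comp measurable_snd).mul hindle
      · have he2 : (fun p : ℝ × ℝ => (Ici p.2).indicator (1 : ℝ → ℝ≥0∞) t) =
            fun p : ℝ × ℝ => (Iic t).indicator 1 p.2 := by
          funext p; exact hflipIci p.2 t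
        rw [he2]
        exact (measurable_const.indicator measurableSet_Iic).comp measurable_snd
    · apply Measurable.mul
      · exact (hgE.comp measurable_snd).mul hindge
      · have he2 : (fun p : ℝ × ℝ => (Iic p.2).indicator (1 : ℝ → ℝ≥0∞) t) =
            fun p : ℝ × ℝ => (Ici t).indicator 1 p.2 := by
          funext p; exact hflipIic p.2 t
        rw [he2]
        exact (measurable_const.indicator measurableSet_Ici).comp measurable_snd
  -- inner s-integral
  have hsInt : ∀ x t : ℝ, (∫⁻ s in B, K x s t ∂μ) =
      ENNReal.ofReal (g x) * ((Ici x).indicator 1 t * μ (Iic x ∩ B) +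
        (Iic x).indicator 1 t * μ (Ici x ∩ B)) := by
    intro x t
    have e1 : ∀ s : ℝ, K x s t =
        (ENNReal.ofReal (g x) * (Ici x).indicator 1 t) * (Iic x).indicator 1 s +
          (ENNReal.ofReal (g x) * (Iic x).indicator 1 t) * (Ici x).indicator 1 s := by
      intro s; simp only [hKdef]; ring
    rw [lintegral_congr e1,
      lintegral_add_left (show
          Measurable fun s : ℝ => (ENNReal.ofReal (g x) * (Ici x).indicator 1 t) *
            (Iic x).indicator 1 s from (measurable_const.mul
        (measurable_one.indicator measurableSet_Iic)))]
    have c1 : (ENNReal.ofReal (g x) * (Ici x).indicator 1 t) ≠ ⊤ :=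
      ENNReal.mul_ne_top ENNReal.ofReal_ne_top
        (ne_top_of_le_ne_top ENNReal.one_ne_top (hind_le_one _ _))
    have c2 : (ENNReal.ofReal (g x) * (Iic x).indicator 1 t) ≠ ⊤ :=
      ENNReal.mul_ne_top ENNReal.ofReal_ne_top
        (ne_top_of_le_ne_top ENNReal.one_ne_top (hind_le_one _ _))
    rw [lintegral_const_mul' _ _ c1, lintegral_const_mul' _ _ c2,
      lintegral_indicator_one measurableSet_Iic,
      lintegral_indicator_one measurableSet_Ici,
      Measure.restrict_apply measurableSet_Iic,
      Measure.restrict_apply measurableSet_Ici]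
    ring
  -- second swap
  have hswap2 : (∫⁻ t in B, ∫⁻ x in B, ENNReal.ofReal (g x) *
        ((Ici x).indicator 1 t * μ (Iic x ∩ B) +
          (Iic x).indicator 1 t * μ (Ici x ∩ B)) ∂volume ∂μ) =
      ∫⁻ x in B, ∫⁻ t in B, ENNReal.ofReal (g x) *
        ((Ici x).indicator 1 t * μ (Iic x ∩ B) +
          (Iic x).indicator 1 t * μ (Ici x ∩ B)) ∂μ ∂volume := by
    apply lintegral_lintegral_swap
    apply Measurable.aemeasurable
    apply Measurable.mul
    · exact hgE.comp measurable_snd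
    · apply Measurable.add
      · exact hindge.mul (hPmeas.comp measurable_snd)
      · exact hindle.mul (hQmeas.comp measurable_snd)
  -- inner t-integral
  have htInt : ∀ x : ℝ, (∫⁻ t in B, ENNReal.ofReal (g x) *
        ((Ici x).indicator 1 t * μ (Iic x ∩ B) +
          (Iic x).indicator 1 t * μ (Ici x ∩ B)) ∂μ) =
      ENNReal.ofReal (g x) * (2 * (μ (Iic x ∩ B) * μ (Ici x ∩ B))) := by
    intro x
    rw [lintegral_const_mul' _ _ ENNReal.ofReal_ne_top]
    congr 1
    rw [lintegral_add_left (show Measurable fun t : ℝ =>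
        (Ici x).indicator (1 : ℝ → ℝ≥0∞) t * μ (Iic x ∩ B) from
        (measurable_one.indicator measurableSet_Ici).mul measurable_const)]
    rw [lintegral_mul_const' _ _ (hPle x), lintegral_mul_const' _ _ (hQle x),
      lintegral_indicator_one measurableSet_Ici,
      lintegral_indicator_one measurableSet_Iic,
      Measure.restrict_apply measurableSet_Ici,
      Measure.restrict_apply measurableSet_Iic]
    ring
  -- Step D : kernel estimate and conclusion
  have hYw : (∫⁻ x in B, w x * ENNReal.ofReal (g x) ∂volume) = Y := by
    rw [hYdef, hμdef, restrict_withDensity hBm,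
      lintegral_withDensity_eq_lintegral_mul _ hwm hgE]
    rfl
  have hstepD : (∫⁻ x in B, ENNReal.ofReal (g x) *
        (2 * (μ (Iic x ∩ B) * μ (Ici x ∩ B))) ∂volume) ≤
      ENNReal.ofReal (b - a) * μ B * Y := by
    calc (∫⁻ x in B, ENNReal.ofReal (g x) *
          (2 * (μ (Iic x ∩ B) * μ (Ici x ∩ B))) ∂volume)
        ≤ ∫⁻ x in B, (ENNReal.ofReal (b - a) * μ B) *
            (w x * ENNReal.ofReal (g x)) ∂volume := by
          refine lintegral_mono_ae ?_
          filter_upwards [ae_restrict_mem hBm] with x hx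
          calc ENNReal.ofReal (g x) * (2 * (μ (Iic x ∩ B) * μ (Ici x ∩ B)))
              ≤ ENNReal.ofReal (g x) * (ENNReal.ofReal (b - a) * (w x * μ B)) :=
                mul_le_mul_right (hker x hx) _
            _ = (ENNReal.ofReal (b - a) * μ B) * (w x * ENNReal.ofReal (g x)) := by
                ring
      _ = (ENNReal.ofReal (b - a) * μ B) *
            ∫⁻ x in B, w x * ENNReal.ofReal (g x) ∂volume :=
          lintegral_const_mul' _ _ (ENNReal.mul_ne_top ENNReal.ofReal_ne_top hMtop)
      _ = ENNReal.ofReal (b - a) * μ B * Y := by rw [hYw]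
  -- assemble
  have hD : D ≤ ENNReal.ofReal (b - a) * μ B * Y := by
    calc D ≤ ∫⁻ t in B, ∫⁻ s in B, ∫⁻ x in B, K x s t ∂volume ∂μ ∂μ := hstepB
      _ = ∫⁻ t in B, ∫⁻ x in B, ∫⁻ s in B, K x s t ∂μ ∂volume ∂μ :=
          lintegral_congr fun t => hswap1 t
      _ = ∫⁻ t in B, ∫⁻ x in B, ENNReal.ofReal (g x) *
            ((Ici x).indicator 1 t * μ (Iic x ∩ B) +
              (Iic x).indicator 1 t * μ (Ici x ∩ B)) ∂volume ∂μ :=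
          lintegral_congr fun t => lintegral_congr fun x => hsInt x t
      _ = ∫⁻ x in B, ∫⁻ t in B, ENNReal.ofReal (g x) *
            ((Ici x).indicator 1 t * μ (Iic x ∩ B) +
              (Iic x).indicator 1 t * μ (Ici x ∩ B)) ∂μ ∂volume := hswap2
      _ = ∫⁻ x in B, ENNReal.ofReal (g x) *
            (2 * (μ (Iic x ∩ B) * μ (Ici x ∩ B))) ∂volume :=
          lintegral_congr fun x => htInt x
      _ ≤ ENNReal.ofReal (b - a) * μ B * Y := hstepD
  have hXY : (∫⁻ t in B, ENNReal.ofReal |u t - c| ∂μ) ≤ ENNReal.ofReal (b - a) * Y := by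
    calc (∫⁻ t in B, ENNReal.ofReal |u t - c| ∂μ) ≤ D / μ B := hstepA
      _ ≤ (ENNReal.ofReal (b - a) * μ B * Y) / μ B := ENNReal.div_le_div_right hD _
      _ = ENNReal.ofReal (b - a) * Y := by
          rw [show ENNReal.ofReal (b - a) * μ B * Y =
              μ B * (ENNReal.ofReal (b - a) * Y) by ring,
            mul_div_assoc, ENNReal.mul_div_cancel hM0 hMtop]
  calc (∫⁻ t in B, ENNReal.ofReal |u t - c| ∂μ) / μ B
      ≤ (ENNReal.ofReal (b - a) * Y) / μ B := ENNReal.div_le_div_right hXY _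
    _ = ENNReal.ofReal (b - a) * (Y / μ B) := by rw [mul_div_assoc]
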